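/- Let n, k, t be positive integers with t + 1 ≤ k ≤ n and t ≤ ⌊2k/3⌋, and let q = ⌊2k/3⌋. Then for every 2-coloring (red/blue) of the edges of K^k_n, there exist a t-tight component C_r of the red hypergraph and a t-tight component C_b of the blue hypergraph such that every q-element subset of the vertex set belongs to E^(q)(C_r) ∪ E^(q)(C_b). -/

import Mathlib

open Finset

/-- The `s`-shadow of a hypergraph `H`: all `s`-element vertex sets contained in
some edge of `H`. -/
def hShadow {V : Type*} [DecidableEq V] (s : ℕ) (H : Finset (Finset V)) :
    Finset (Finset V) :=
  H.biUnion fun e => e.powersetCard s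

/-- One step of `t`-tight connectivity: both `a` and `b` are edges of `H` and they
share at least `t` vertices. -/
def TightStep {V : Type*} [DecidableEq V] (t : ℕ) (H : Finset (Finset V))
    (a b : Finset V) : Prop :=
  a ∈ H ∧ b ∈ H ∧ t ≤ (a ∩ b).card

/-- Two edges lie in the same `t`-tight component iff they are joined by a chain of
edges, consecutive ones sharing at least `t` vertices. -/
def TightConn {V : Type*} [DecidableEq V] (t : ℕ) (H : Finset (Finset V)) :
    Finset V → Finset V → Prop :=
  Relation.ReflTransGen (TightStep t H)

open scoped Classical in
/-- The `t`-tight component of the edge `e` in the hypergraph `H`. -/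
noncomputable def tightComponent {V : Type*} [DecidableEq V] (t : ℕ)
    (H : Finset (Finset V)) (e : Finset V) : Finset (Finset V) :=
  H.filter fun f => TightConn t H e f

/-- The `k`-uniform hypergraph `H i` of edges of `K^k_n` having color `i` under the
coloring `c`. -/
def colorClass (n r k : ℕ) (c : Finset (Fin n) → Fin r) (i : Fin r) :
    Finset (Finset (Fin n)) :=
  (Finset.univ.powersetCard k).filter fun e => c e = i

/-- `M(n,r,k,t,s;c)`: the largest number of vertex `s`-sets contained in the edges of
a monochromatic `t`-tight component of the `r`-coloring `c` of `K^k_n`. -/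
noncomputable def Mcol (n r k t s : ℕ) (c : Finset (Fin n) → Fin r) : ℕ :=
  Finset.univ.sup fun i : Fin r =>
    (colorClass n r k c i).sup fun e =>
      (hShadow s (tightComponent t (colorClass n r k c i) e)).card

/-- `M(n,r,k,t,s)`: the minimum of `M(n,r,k,t,s;c)` over all `r`-colorings `c` of
`K^k_n`. -/
noncomputable def Mmin (n r k t s : ℕ) : ℕ :=
  sInf {m | ∃ c : Finset (Fin n) → Fin r, Mcol n r k t s c = m}

namespace S15

variable {n k t : ℕ}

lemma mem_CC {c : Finset (Fin n) → Fin 2} {i : Fin 2} {e : Finset (Fin n)} :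
    e ∈ colorClass n 2 k c i ↔ e.card = k ∧ c e = i := by
  simp [colorClass, Finset.mem_filter, Finset.mem_powersetCard, Finset.subset_univ]

lemma conn_single {H : Finset (Finset (Fin n))} {a b : Finset (Fin n)}
    (ha : a ∈ H) (hb : b ∈ H) (h : t ≤ (a ∩ b).card) : TightConn t H a b :=
  Relation.ReflTransGen.single ⟨ha, hb, h⟩

lemma conn_symm {H : Finset (Finset (Fin n))} {a b : Finset (Fin n)}
    (h : TightConn t H a b) : TightConn t H b a := by
  refine @Std.Symm.symm _ _ (@Relation.ReflTransGen.symmetric _ _ ⟨?_⟩) _ _ h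
  rintro x y ⟨hx, hy, hxy⟩
  exact ⟨hy, hx, by rwa [Finset.inter_comm]⟩

/-- `A` and `B` are linked in color `i`: there are edges `f ⊇ A`, `g ⊇ B` of color `i`
in the same `t`-tight component. -/
def Lk (n k t : ℕ) (c : Finset (Fin n) → Fin 2) (i : Fin 2) (A B : Finset (Fin n)) : Prop :=
  ∃ f g : Finset (Fin n), f ∈ colorClass n 2 k c i ∧ g ∈ colorClass n 2 k c i ∧
    A ⊆ f ∧ B ⊆ g ∧ TightConn t (colorClass n 2 k c i) f g

lemma Lk_symm {c : Finset (Fin n) → Fin 2} {i : Fin 2} {A B : Finset (Fin n)}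
    (h : Lk n k t c i A B) : Lk n k t c i B A := by
  obtain ⟨f, g, hf, hg, hA, hB, hc⟩ := h
  exact ⟨g, f, hg, hf, hB, hA, conn_symm hc⟩

lemma Lk_single {c : Finset (Fin n) → Fin 2} {i : Fin 2} {A B e : Finset (Fin n)}
    (he : e ∈ colorClass n 2 k c i) (hA : A ⊆ e) (hB : B ⊆ e) : Lk n k t c i A B :=
  ⟨e, e, he, he, hA, hB, Relation.ReflTransGen.refl⟩

lemma Lk_trans {c : Finset (Fin n) → Fin 2} {i : Fin 2} {A B C : Finset (Fin n)}
    (htB : t ≤ B.card) (h1 : Lk n k t c i A B) (h2 : Lk n k t c i B C) :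
    Lk n k t c i A C := by
  obtain ⟨f, g, hf, hg, hA, hB, hc1⟩ := h1
  obtain ⟨f', g', hf', hg', hB', hC, hc2⟩ := h2
  refine ⟨f, g', hf, hg', hA, hC, hc1.trans (Relation.ReflTransGen.trans ?_ hc2)⟩
  exact conn_single hg hf'
    (le_trans htB (Finset.card_le_card (Finset.subset_inter hB hB')))

/-- `A` and `B` are linked in no color. -/
def Conflict (n k t : ℕ) (c : Finset (Fin n) → Fin 2) (A B : Finset (Fin n)) : Prop :=
  ∀ i, ¬ Lk n k t c i A B

lemma ext_univ {A : Finset (Fin n)} {m : ℕ} (h1 : A.card ≤ m) (h2 : m ≤ n) :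
    ∃ e : Finset (Fin n), A ⊆ e ∧ e.card = m := by
  obtain ⟨e, hAe, _, hc⟩ := Finset.exists_subsuperset_card_eq (Finset.subset_univ A) h1
    (by simpa [Finset.card_univ] using h2)
  exact ⟨e, hAe, hc⟩

lemma ext_in {A W : Finset (Fin n)} (m : ℕ) (hAW : A ⊆ W) (h1 : A.card ≤ m)
    (h2 : m ≤ W.card) : ∃ e, A ⊆ e ∧ e ⊆ W ∧ e.card = m :=
  Finset.exists_subsuperset_card_eq hAW h1 h2

lemma inter_card_ge {e f W : Finset (Fin n)} (he : e ⊆ W) (hf : f ⊆ W) :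
    e.card + f.card ≤ (e ∩ f).card + W.card := by
  have h1 := Finset.card_inter_add_card_union e f
  have h2 : (e ∪ f).card ≤ W.card := Finset.card_le_card (Finset.union_subset he hf)
  omega

section Main

variable {q p : ℕ} {c : Finset (Fin n) → Fin 2}

/-- Window dichotomy: if `A, B` are conflicting `q`-sets inside a window `W` of size
`k + p`, then all edges of `W` containing `A` get one color and all edges of `W`
containing `B` get the other. -/
lemma WDich (hqpk : q + p = k) (htq : t ≤ q)
    {A B W : Finset (Fin n)} (hA : A.card = q) (hB : B.card = q)
    (hConf : Conflict n k t c A B) (hW : W.card = k + p) (hAW : A ⊆ W) (hBW : B ⊆ W) :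
    ∃ r : Fin 2, (∀ e, e ⊆ W → e.card = k → A ⊆ e → c e = r) ∧
                 (∀ e, e ⊆ W → e.card = k → B ⊆ e → c e ≠ r) := by
  have key : ∀ x h : Finset (Fin n), x ⊆ W → x.card = k → A ⊆ x →
      h ⊆ W → h.card = k → B ⊆ h → c x ≠ c h := by
    intro x h hxW hxk hAx hhW hhk hBh hch
    have hstep : t ≤ (x ∩ h).card := by
      have := inter_card_ge hxW hhW; omega
    exact hConf (c h) ⟨x, h, mem_CC.2 ⟨hxk, hch⟩, mem_CC.2 ⟨hhk, rfl⟩, hAx, hBh,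
      conn_single (mem_CC.2 ⟨hxk, hch⟩) (mem_CC.2 ⟨hhk, rfl⟩) hstep⟩
  obtain ⟨eA, hAeA, heAW, heAk⟩ := ext_in k hAW (by omega) (by omega)
  refine ⟨c eA, ?_, ?_⟩
  · intro e heW hek hAe
    by_contra hne
    obtain ⟨hb, hBhb, hhbW, hhbk⟩ := ext_in k hBW (by omega) (by omega)
    have h2 : c hb = c eA ∨ c hb = c e := by
      revert hne; generalize c hb = a; generalize c eA = b'; generalize c e = d
      revert a b' d; decide
    rcases h2 with h2 | h2
    · exact key eA hb heAW heAk hAeA hhbW hhbk hBhb h2.symm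
    · exact key e hb heW hek hAe hhbW hhbk hBhb h2.symm
  · intro e heW hek hBe hce
    exact key eA e heAW heAk hAeA heW hek hBe hce.symm

/-- Orientation constancy across windows containing the conflicting pair. -/
lemma WConst (hqpk : q + p = k) (htq : t ≤ q) (hp1 : 1 ≤ p)
    {A B : Finset (Fin n)} (hA : A.card = q) (hB : B.card = q)
    (hConf : Conflict n k t c A B) :
    ∀ (d : ℕ) (W W' e e' : Finset (Fin n)), (W' \ W).card = d →
      W.card = k + p → W'.card = k + p → A ⊆ W → B ⊆ W → A ⊆ W' → B ⊆ W' →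
      e ⊆ W → e.card = k → A ⊆ e → e' ⊆ W' → e'.card = k → A ⊆ e' → c e = c e' := by
  intro d
  induction d with
  | zero =>
    intro W W' e e' hd hW hW' hAW hBW hAW' hBW' heW hek hAe heW' he'k hAe'
    have hsub : W' ⊆ W := by
      rwa [← Finset.sdiff_eq_empty_iff_subset, ← Finset.card_eq_zero]
    have hWW : W' = W := Finset.eq_of_subset_of_card_le hsub (by omega)
    obtain ⟨r, h1, _⟩ := WDich hqpk htq hA hB hConf hW hAW hBW
    rw [h1 e heW hek hAe, h1 e' (hWW ▸ heW') he'k hAe']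
  | succ d ih =>
    intro W W' e e' hd hW hW' hAW hBW hAW' hBW' heW hek hAe heW' he'k hAe'
    have hyne : (W' \ W).Nonempty := by
      rw [← Finset.card_pos]; omega
    obtain ⟨y, hy⟩ := hyne
    rw [Finset.mem_sdiff] at hy
    have hxne : (W \ W').Nonempty := by
      rw [← Finset.card_pos, Finset.card_sdiff_comm (by omega)]; omega
    obtain ⟨x, hx⟩ := hxne
    rw [Finset.mem_sdiff] at hx
    have hxA : x ∉ A := fun h => hx.2 (hAW' h)
    have hxB : x ∉ B := fun h => hx.2 (hBW' h)
    set W₂ : Finset (Fin n) := insert y (W.erase x) with hW₂def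
    have hyW : y ∉ W.erase x := fun h => hy.2 (Finset.mem_of_mem_erase h)
    have hW₂card : W₂.card = k + p := by
      rw [hW₂def, Finset.card_insert_of_notMem hyW, Finset.card_erase_of_mem hx.1]
      omega
    have hAW₂ : A ⊆ W₂ := fun a ha =>
      Finset.mem_insert_of_mem (Finset.mem_erase.2 ⟨fun h => hxA (h ▸ ha), hAW ha⟩)
    have hBW₂ : B ⊆ W₂ := fun a ha =>
      Finset.mem_insert_of_mem (Finset.mem_erase.2 ⟨fun h => hxB (h ▸ ha), hBW ha⟩)
    have hd₂ : (W' \ W₂).card = d := by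
      have : W' \ W₂ = (W' \ W).erase y := by
        ext z
        simp only [hW₂def, Finset.mem_sdiff, Finset.mem_insert, Finset.mem_erase, not_or]
        constructor
        · rintro ⟨hzW', hzy, hzE⟩
          exact ⟨hzy, hzW', fun hzW => hzE ⟨fun hzx => hx.2 (hzx ▸ hzW'), hzW⟩⟩
        · rintro ⟨hzy, hzW', hzW⟩
          exact ⟨hzW', hzy, fun hc => hzW hc.2⟩
      rw [this, Finset.card_erase_of_mem (Finset.mem_sdiff.2 hy), hd]
      omega
    -- common edge g ⊆ W.erase x containing A
    have hAerase : A ⊆ W.erase x := fun a ha =>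
      Finset.mem_erase.2 ⟨fun h => hxA (h ▸ ha), hAW ha⟩
    obtain ⟨g, hAg, hgsub, hgk⟩ := ext_in k hAerase
      (by omega) (by rw [Finset.card_erase_of_mem hx.1]; omega)
    have hgW : g ⊆ W := hgsub.trans (Finset.erase_subset _ _)
    have hgW₂ : g ⊆ W₂ := hgsub.trans (Finset.subset_insert _ _)
    have heg : c e = c g := by
      obtain ⟨r, h1, _⟩ := WDich hqpk htq hA hB hConf hW hAW hBW
      rw [h1 e heW hek hAe, h1 g hgW hgk hAg]
    rw [heg]
    exact ih W₂ W' g e' hd₂ hW₂card hW' hAW₂ hBW₂ hAW' hBW' hgW₂ hgk hAg heW' he'k hAe'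

/-- Global orientation of a conflicting pair: there is a color `r` such that every
edge containing `A` and missing at most `p` points of `B` has color `r`, and every
edge containing `B` and missing at most `p` points of `A` has a color `≠ r`. -/
lemma Orient (hqpk : q + p = k) (htq : t ≤ q) (hp1 : 1 ≤ p) (hq2p : q ≤ 2 * p)
    (hnkp : k + p ≤ n)
    {A B : Finset (Fin n)} (hA : A.card = q) (hB : B.card = q)
    (hConf : Conflict n k t c A B) :
    ∃ r : Fin 2, (∀ e, e.card = k → A ⊆ e → (B \ e).card ≤ p → c e = r) ∧
                 (∀ e, e.card = k → B ⊆ e → (A \ e).card ≤ p → c e ≠ r) := by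
  have hABcard : (A ∪ B).card ≤ k + p := by
    have := Finset.card_union_le A B; omega
  obtain ⟨Ws, hABWs, hWs⟩ := ext_univ hABcard hnkp
  have hAWs : A ⊆ Ws := (Finset.subset_union_left).trans hABWs
  have hBWs : B ⊆ Ws := (Finset.subset_union_right).trans hABWs
  obtain ⟨es, hAes, hesWs, hesk⟩ := ext_in k hAWs (by omega) (by omega)
  refine ⟨c es, ?_, ?_⟩
  · intro e hek hAe hBe
    have hcard2 : (e ∪ B).card ≤ k + p := by
      have h1 : e ∪ B ⊆ e ∪ (B \ e) := by
        intro z hz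
        rcases Finset.mem_union.1 hz with h | h
        · exact Finset.mem_union_left _ h
        · by_cases hze : z ∈ e
          · exact Finset.mem_union_left _ hze
          · exact Finset.mem_union_right _ (Finset.mem_sdiff.2 ⟨h, hze⟩)
      have h2 := Finset.card_le_card h1
      have h3 := Finset.card_union_le e (B \ e)
      omega
    obtain ⟨W, heBW, hWcard⟩ := ext_univ hcard2 hnkp
    have heW : e ⊆ W := (Finset.subset_union_left).trans heBW
    have hBW : B ⊆ W := (Finset.subset_union_right).trans heBW
    have hAW : A ⊆ W := hAe.trans heW
    exact WConst hqpk htq hp1 hA hB hConf ((Ws \ W).card) W Ws e es rfl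
      hWcard hWs hAW hBW hAWs hBWs heW hek hAe hesWs hesk hAes
  · intro e hek hBe hAe
    have hcard2 : (e ∪ A).card ≤ k + p := by
      have h1 : e ∪ A ⊆ e ∪ (A \ e) := by
        intro z hz
        rcases Finset.mem_union.1 hz with h | h
        · exact Finset.mem_union_left _ h
        · by_cases hze : z ∈ e
          · exact Finset.mem_union_left _ hze
          · exact Finset.mem_union_right _ (Finset.mem_sdiff.2 ⟨h, hze⟩)
      have h2 := Finset.card_le_card h1
      have h3 := Finset.card_union_le e (A \ e)
      omega
    obtain ⟨W, heAW, hWcard⟩ := ext_univ hcard2 hnkp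
    have heW : e ⊆ W := (Finset.subset_union_left).trans heAW
    have hAW : A ⊆ W := (Finset.subset_union_right).trans heAW
    have hBW : B ⊆ W := hBe.trans heW
    obtain ⟨r, h1, h2⟩ := WDich hqpk htq hA hB hConf hWcard hAW hBW
    obtain ⟨gA, hAgA, hgAW, hgAk⟩ := ext_in k hAW (by omega) (by omega)
    have hrs : r = c es := by
      rw [← h1 gA hgAW hgAk hAgA]
      exact WConst hqpk htq hp1 hA hB hConf ((Ws \ W).card) W Ws gA es rfl
        hWcard hWs hAW hBW hAWs hBWs hgAW hgAk hAgA hesWs hesk hAes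
    rw [← hrs]
    exact h2 e heW hek hBe

/-- If there is a conflicting pair, some `q`-set `M` is linked to every `q`-set. -/
lemma MainBase (hqpk : q + p = k) (htq : t ≤ q) (hp1 : 1 ≤ p) (hq2p : q ≤ 2 * p)
    (hnkp : k + p ≤ n) (hkn : k ≤ n)
    {S T : Finset (Fin n)} (hS : S.card = q) (hT : T.card = q)
    (hConf : Conflict n k t c S T) :
    ∃ M : Finset (Fin n), M.card = q ∧
      ∀ U : Finset (Fin n), U.card = q → ∃ i, Lk n k t c i U M := by
  obtain ⟨r, FrS, FrT⟩ := Orient hqpk htq hp1 hq2p hnkp hS hT hConf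
  have hfin : ∀ r' : Fin 2, ∃ b, r' ≠ b ∧ ∀ x : Fin 2, x ≠ r' → x = b := by decide
  obtain ⟨b, hrb, hoth⟩ := hfin r
  have hothb : ∀ x : Fin 2, x ≠ b → x = r := by
    intro x hx
    by_contra hxr
    exact hx (hoth x hxr)
  obtain ⟨X, hXS, hX⟩ := Finset.exists_subset_card_eq (show q - p ≤ S.card by omega)
  obtain ⟨Y, hYT, hY⟩ := Finset.exists_subset_card_eq (show q - p ≤ T.card by omega)
  have hXYcard : (X ∪ Y).card ≤ q := by
    have := Finset.card_union_le X Y; omega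
  obtain ⟨M, hXYM, hMq⟩ := ext_univ hXYcard (by omega)
  have hXM : X ⊆ M := (Finset.subset_union_left).trans hXYM
  have hYM : Y ⊆ M := (Finset.subset_union_right).trans hXYM
  refine ⟨M, hMq, ?_⟩
  intro U hU
  by_contra hno
  push_neg at hno
  have hConfMU : Conflict n k t c M U := fun i h => hno i (Lk_symm h)
  -- union card bound via a common subset of the intersection
  have unionb : ∀ (A B Z : Finset (Fin n)), A.card = q → B.card = q → Z ⊆ A → Z ⊆ B →
      Z.card = q - p → (A ∪ B).card ≤ k := by
    intro A B Z hA hB hZA hZB hZ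
    have h1 := Finset.card_inter_add_card_union A B
    have h2 : Z.card ≤ (A ∩ B).card := Finset.card_le_card (Finset.subset_inter hZA hZB)
    omega
  -- sdiff bound: if Z ⊆ B, Z ⊆ e, B.card = q, Z.card = q-p then (B \ e).card ≤ p
  have sdiffb : ∀ (B Z e : Finset (Fin n)), B.card = q → Z ⊆ B → Z ⊆ e →
      Z.card = q - p → (B \ e).card ≤ p := by
    intro B Z e hB hZB hZe hZ
    have h1 : B \ e ⊆ B \ Z := Finset.sdiff_subset_sdiff (le_refl B) hZe
    have h2 := Finset.card_le_card h1
    have h3 := Finset.card_sdiff_of_subset hZB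
    omega
  -- h_S : edge ⊇ M ∪ S, forced color r
  obtain ⟨hS', hsubS, hSk⟩ := ext_univ (unionb M S X hMq hS hXM hXS hX) hkn
  have hMhS : M ⊆ hS' := (Finset.subset_union_left).trans hsubS
  have hShS : S ⊆ hS' := (Finset.subset_union_right).trans hsubS
  have hcS : c hS' = r := FrS hS' hSk hShS (sdiffb T Y hS' hT hYT (hYM.trans hMhS) hY)
  -- h_T : edge ⊇ M ∪ T, forced color b
  obtain ⟨hT', hsubT, hTk⟩ := ext_univ (unionb M T Y hMq hT hYM hYT hY) hkn
  have hMhT : M ⊆ hT' := (Finset.subset_union_left).trans hsubT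
  have hThT : T ⊆ hT' := (Finset.subset_union_right).trans hsubT
  have hcT : c hT' = b :=
    hoth _ (FrT hT' hTk hThT (sdiffb S X hT' hS hXS (hXM.trans hMhT) hX))
  obtain ⟨r', F1, F2⟩ := Orient hqpk htq hp1 hq2p hnkp hMq hU hConfMU
  by_cases hr' : r' = r
  · -- M is on the r side of the pair (M, U)
    obtain ⟨YA, hYAU, hYA⟩ := Finset.exists_subset_card_eq (show q - p ≤ U.card by omega)
    have hM0card : (Y ∪ YA).card ≤ q := by
      have := Finset.card_union_le Y YA; omega
    obtain ⟨M', hsubM', hM'q⟩ := ext_univ hM0card (by omega)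
    have hYM' : Y ⊆ M' := (Finset.subset_union_left).trans hsubM'
    have hYAM' : YA ⊆ M' := (Finset.subset_union_right).trans hsubM'
    -- h₁ ⊇ M' ∪ M, color r
    obtain ⟨h₁, hsub1, h1k⟩ := ext_univ (unionb M' M Y hM'q hMq hYM' hYM hY) hkn
    have hM'h1 : M' ⊆ h₁ := (Finset.subset_union_left).trans hsub1
    have hMh1 : M ⊆ h₁ := (Finset.subset_union_right).trans hsub1
    have hc1 : c h₁ = r := by
      rw [← hr']
      exact F1 h₁ h1k hMh1 (sdiffb U YA h₁ hU hYAU (hYAM'.trans hM'h1) hYA)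
    -- h₃ ⊇ M' ∪ U, color b
    obtain ⟨h₃, hsub3, h3k⟩ := ext_univ (unionb M' U YA hM'q hU hYAM' hYAU hYA) hkn
    have hM'h3 : M' ⊆ h₃ := (Finset.subset_union_left).trans hsub3
    have hUh3 : U ⊆ h₃ := (Finset.subset_union_right).trans hsub3
    have hc3 : c h₃ = b := by
      refine hoth _ ?_
      rw [← hr'] at hrb ⊢
      exact F2 h₃ h3k hUh3 (sdiffb M Y h₃ hMq hYM (hYM'.trans hM'h3) hY)
    -- h₂ ⊇ M' ∪ T
    obtain ⟨h₂, hsub2, h2k⟩ := ext_univ (unionb M' T Y hM'q hT hYM' hYT hY) hkn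
    have hM'h2 : M' ⊆ h₂ := (Finset.subset_union_left).trans hsub2
    have hTh2 : T ⊆ h₂ := (Finset.subset_union_right).trans hsub2
    by_cases hc2 : c h₂ = r
    · -- red chain hS' ~ h₁ ~ h₂ gives Lk r S T
      refine hConf r ⟨hS', h₂, mem_CC.2 ⟨hSk, hcS⟩, mem_CC.2 ⟨h2k, hc2⟩, hShS, hTh2, ?_⟩
      have m1 : hS' ∈ colorClass n 2 k c r := mem_CC.2 ⟨hSk, hcS⟩
      have m2 : h₁ ∈ colorClass n 2 k c r := mem_CC.2 ⟨h1k, hc1⟩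
      have m3 : h₂ ∈ colorClass n 2 k c r := mem_CC.2 ⟨h2k, hc2⟩
      refine Relation.ReflTransGen.trans (conn_single m1 m2 ?_) (conn_single m2 m3 ?_)
      · refine le_trans (by omega : t ≤ M.card)
          (Finset.card_le_card (Finset.subset_inter hMhS hMh1))
      · refine le_trans (by omega : t ≤ M'.card)
          (Finset.card_le_card (Finset.subset_inter hM'h1 hM'h2))
    · -- blue: Lk b M T and Lk b T U give Lk b M U, contradiction
      have hc2b : c h₂ = b := hoth _ hc2
      refine hConfMU b (Lk_trans (by omega : t ≤ T.card)
        (Lk_single (mem_CC.2 ⟨hTk, hcT⟩) hMhT hThT) ?_)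
      refine ⟨h₂, h₃, mem_CC.2 ⟨h2k, hc2b⟩, mem_CC.2 ⟨h3k, hc3⟩, hTh2, hUh3, ?_⟩
      refine conn_single (mem_CC.2 ⟨h2k, hc2b⟩) (mem_CC.2 ⟨h3k, hc3⟩) ?_
      refine le_trans (by omega : t ≤ M'.card)
        (Finset.card_le_card (Finset.subset_inter hM'h2 hM'h3))
  · -- M is on the b side of the pair (M, U)
    have hr'b : r' = b := hoth r' hr'
    obtain ⟨YB, hYBU, hYB⟩ := Finset.exists_subset_card_eq (show q - p ≤ U.card by omega)
    have hM0card : (X ∪ YB).card ≤ q := by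
      have := Finset.card_union_le X YB; omega
    obtain ⟨M'', hsubM'', hM''q⟩ := ext_univ hM0card (by omega)
    have hXM'' : X ⊆ M'' := (Finset.subset_union_left).trans hsubM''
    have hYBM'' : YB ⊆ M'' := (Finset.subset_union_right).trans hsubM''
    -- h₁' ⊇ M'' ∪ M, color b
    obtain ⟨h₁', hsub1, h1k⟩ := ext_univ (unionb M'' M X hM''q hMq hXM'' hXM hX) hkn
    have hM''h1 : M'' ⊆ h₁' := (Finset.subset_union_left).trans hsub1
    have hMh1 : M ⊆ h₁' := (Finset.subset_union_right).trans hsub1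
    have hc1 : c h₁' = b := by
      rw [← hr'b]
      exact F1 h₁' h1k hMh1 (sdiffb U YB h₁' hU hYBU (hYBM''.trans hM''h1) hYB)
    -- h₃' ⊇ M'' ∪ U, color r
    obtain ⟨h₃', hsub3, h3k⟩ := ext_univ (unionb M'' U YB hM''q hU hYBM'' hYBU hYB) hkn
    have hM''h3 : M'' ⊆ h₃' := (Finset.subset_union_left).trans hsub3
    have hUh3 : U ⊆ h₃' := (Finset.subset_union_right).trans hsub3
    have hc3 : c h₃' = r := by
      refine hothb _ ?_
      rw [← hr'b]
      exact F2 h₃' h3k hUh3 (sdiffb M X h₃' hMq hXM (hXM''.trans hM''h3) hX)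
    -- h₂' ⊇ M'' ∪ S
    obtain ⟨h₂', hsub2, h2k⟩ := ext_univ (unionb M'' S X hM''q hS hXM'' hXS hX) hkn
    have hM''h2 : M'' ⊆ h₂' := (Finset.subset_union_left).trans hsub2
    have hSh2 : S ⊆ h₂' := (Finset.subset_union_right).trans hsub2
    by_cases hc2 : c h₂' = b
    · -- blue chain h₂' ~ h₁' ~ hT' gives Lk b S T
      refine hConf b ⟨h₂', hT', mem_CC.2 ⟨h2k, hc2⟩, mem_CC.2 ⟨hTk, hcT⟩, hSh2, hThT, ?_⟩
      have m1 : h₂' ∈ colorClass n 2 k c b := mem_CC.2 ⟨h2k, hc2⟩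
      have m2 : h₁' ∈ colorClass n 2 k c b := mem_CC.2 ⟨h1k, hc1⟩
      have m3 : hT' ∈ colorClass n 2 k c b := mem_CC.2 ⟨hTk, hcT⟩
      refine Relation.ReflTransGen.trans (conn_single m1 m2 ?_) (conn_single m2 m3 ?_)
      · refine le_trans (by omega : t ≤ M''.card)
          (Finset.card_le_card (Finset.subset_inter hM''h2 hM''h1))
      · refine le_trans (by omega : t ≤ M.card)
          (Finset.card_le_card (Finset.subset_inter hMh1 hMhT))
    · -- red: Lk r M S and Lk r S U give Lk r M U, contradiction
      have hc2r : c h₂' = r := hothb _ hc2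
      refine hConfMU r (Lk_trans (by omega : t ≤ S.card)
        (Lk_single (mem_CC.2 ⟨hSk, hcS⟩) hMhS hShS) ?_)
      refine ⟨h₂', h₃', mem_CC.2 ⟨h2k, hc2r⟩, mem_CC.2 ⟨h3k, hc3⟩, hSh2, hUh3, ?_⟩
      refine conn_single (mem_CC.2 ⟨h2k, hc2r⟩) (mem_CC.2 ⟨h3k, hc3⟩) ?_
      refine le_trans (by omega : t ≤ M''.card)
        (Finset.card_le_card (Finset.subset_inter hM''h2 hM''h3))

end Main

end S15

/-- **Covering by one red and one blue component.** Let `t + 1 ≤ k ≤ n`,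
`t ≤ ⌊2k/3⌋`, and `q = ⌊2k/3⌋`. Then for every 2-coloring of `K^k_n` there are a
red `t`-tight component `C_r` and a blue `t`-tight component `C_b` (each possibly
empty) such that every `q`-subset of the vertex set lies in
`E^(q)(C_r) ∪ E^(q)(C_b)`. -/
theorem statement15 (n k t : ℕ) (ht : 0 < t) (htk : t + 1 ≤ k) (hkn : k ≤ n)
    (htq : t ≤ 2 * k / 3) (c : Finset (Fin n) → Fin 2) :
    ∃ Cr Cb : Finset (Finset (Fin n)),
      (Cr = ∅ ∨ ∃ e ∈ colorClass n 2 k c 0,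
        Cr = tightComponent t (colorClass n 2 k c 0) e) ∧
      (Cb = ∅ ∨ ∃ e ∈ colorClass n 2 k c 1,
        Cb = tightComponent t (colorClass n 2 k c 1) e) ∧
      ∀ S : Finset (Fin n), S.card = 2 * k / 3 →
        S ∈ hShadow (2 * k / 3) Cr ∪ hShadow (2 * k / 3) Cb := by
  classical
  set q := 2 * k / 3 with hqdef
  set p := k - q with hpdef
  have hqpk : q + p = k := by omega
  have hp1 : 1 ≤ p := by omega
  have hq2p : q ≤ 2 * p := by omega
  have hqk : q ≤ k := by omega
  have htq' : t ≤ q := htq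
  -- it suffices to give, for each color, a possibly empty tight component,
  -- such that together they cover all q-sets
  suffices h : ∃ E : Fin 2 → Finset (Finset (Fin n)),
      (∀ i, E i = ∅ ∨ ∃ e ∈ colorClass n 2 k c i,
        E i = tightComponent t (colorClass n 2 k c i) e) ∧
      ∀ S : Finset (Fin n), S.card = q → ∃ i, S ∈ hShadow q (E i) by
    obtain ⟨E, hleg, hcov⟩ := h
    refine ⟨E 0, E 1, hleg 0, hleg 1, ?_⟩
    intro S hS
    obtain ⟨i, hi⟩ := hcov S hS
    rw [Finset.mem_union]
    fin_cases i
    · exact Or.inl hi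
    · exact Or.inr hi
  -- construction of the pair of components from a base q-set linked to everything
  have build : ∀ M : Finset (Fin n), M.card = q →
      (∀ U : Finset (Fin n), U.card = q → ∃ i, S15.Lk n k t c i U M) →
      ∃ E : Fin 2 → Finset (Finset (Fin n)),
        (∀ i, E i = ∅ ∨ ∃ e ∈ colorClass n 2 k c i,
          E i = tightComponent t (colorClass n 2 k c i) e) ∧
        ∀ S : Finset (Fin n), S.card = q → ∃ i, S ∈ hShadow q (E i) := by
    intro M hMq HM
    refine ⟨fun i => if h : ∃ e ∈ colorClass n 2 k c i, M ⊆ e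
      then tightComponent t (colorClass n 2 k c i) h.choose else ∅, ?_, ?_⟩
    · intro i
      by_cases h : ∃ e ∈ colorClass n 2 k c i, M ⊆ e
      · simp only [dif_pos h]
        exact Or.inr ⟨h.choose, h.choose_spec.1, rfl⟩
      · exact Or.inl (dif_neg h)
    · intro U hU
      obtain ⟨i, f, g, hf, hg, hUf, hMg, hconn⟩ := HM U hU
      have hD : ∃ e ∈ colorClass n 2 k c i, M ⊆ e := ⟨g, hg, hMg⟩
      refine ⟨i, ?_⟩
      simp only [dif_pos hD]
      obtain ⟨he0, hMe0⟩ := hD.choose_spec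
      rw [hShadow, Finset.mem_biUnion]
      refine ⟨f, ?_, ?_⟩
      · rw [tightComponent, Finset.mem_filter]
        refine ⟨hf, Relation.ReflTransGen.trans
          (S15.conn_single he0 hg ?_) (S15.conn_symm hconn)⟩
        refine le_trans (by omega : t ≤ M.card)
          (Finset.card_le_card (Finset.subset_inter hMe0 hMg))
      · rw [Finset.mem_powersetCard]
        exact ⟨hUf, hU⟩
  by_cases hsmall : n + t ≤ 2 * k
  · -- small case: all edges of one color are in a single component
    refine ⟨fun i => if h : (colorClass n 2 k c i).Nonempty
      then tightComponent t (colorClass n 2 k c i) h.choose else ∅, ?_, ?_⟩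
    · intro i
      by_cases h : (colorClass n 2 k c i).Nonempty
      · simp only [dif_pos h]
        exact Or.inr ⟨h.choose, h.choose_spec, rfl⟩
      · exact Or.inl (dif_neg h)
    · intro U hU
      obtain ⟨f, hUf, hfk⟩ := S15.ext_univ (show U.card ≤ k by omega) hkn
      have hf : f ∈ colorClass n 2 k c (c f) := S15.mem_CC.2 ⟨hfk, rfl⟩
      have hne : (colorClass n 2 k c (c f)).Nonempty := ⟨f, hf⟩
      refine ⟨c f, ?_⟩
      simp only [dif_pos hne]
      have he0 := hne.choose_spec
      have he0k : hne.choose.card = k := (S15.mem_CC.1 he0).1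
      rw [hShadow, Finset.mem_biUnion]
      refine ⟨f, ?_, ?_⟩
      · rw [tightComponent, Finset.mem_filter]
        refine ⟨hf, S15.conn_single he0 hf ?_⟩
        have hint := S15.inter_card_ge (Finset.subset_univ hne.choose) (Finset.subset_univ f)
        have hcu : (Finset.univ : Finset (Fin n)).card = n := by
          rw [Finset.card_univ, Fintype.card_fin]
        omega
      · rw [Finset.mem_powersetCard]
        exact ⟨hUf, hU⟩
  · -- large case
    have hnkp : k + p ≤ n := by omega
    by_cases hconf : ∃ S T : Finset (Fin n), S.card = q ∧ T.card = q ∧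
        S15.Conflict n k t c S T
    · obtain ⟨S, T, hS, hT, hC⟩ := hconf
      obtain ⟨M, hMq, HM⟩ := S15.MainBase hqpk htq' hp1 hq2p hnkp hkn hS hT hC
      exact build M hMq HM
    · push_neg at hconf
      obtain ⟨M, -, hMq⟩ := S15.ext_univ
        (show (∅ : Finset (Fin n)).card ≤ q by simp) (by omega)
      refine build M hMq ?_
      intro U hU
      have hnc := hconf U M hU hMq
      rw [S15.Conflict] at hnc
      push_neg at hnc
      exact hnc
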